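/- Let C_out ⊆ F_{q^m}^N with partition N = Σ r_i. Then C_out is MSRD over F_q if and only if for all full-rank matrices A_i ∈ F_q^{r_i × n_i}, the global code C_out · diag(A_1,...,A_g) is maximally recoverable for the local codes generated by the A_i, i.e., it corrects every erasure pattern E with Σ_i Rk(A_i|_{R_i}) ≥ k, where k = log_{q^m}|C_out| and R_i is the set of unerased coordinates in block i. -/

import Mathlib

/-- Sum-rank weight of a block vector over `Fq`: sum over the blocks of the
`Fq`-rank of the block (i.e. the `Fq`-dimension of the span of its entries). -/
noncomputable def srWeight (Fq : Type*) [Field Fq] {F : Type*} [Field F] [Algebra Fq F]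
    {g : ℕ} {r : Fin g → ℕ} (c : ∀ i : Fin g, Fin (r i) → F) : ℕ :=
  ∑ i, Module.finrank Fq (Submodule.span Fq (Set.range (c i)))

/-- Minimum sum-rank distance of a (possibly nonlinear) code. -/
noncomputable def srMinDist (Fq : Type*) [Field Fq] {F : Type*} [Field F] [Algebra Fq F]
    {g : ℕ} {r : Fin g → ℕ} (C : Set (∀ i : Fin g, Fin (r i) → F)) : ℕ :=
  sInf {w | ∃ c ∈ C, ∃ d ∈ C, c ≠ d ∧ w = srWeight Fq (c - d)}

/-- Hamming weight of a block vector. -/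
noncomputable def hamWeight {F : Type*} [Field F] [DecidableEq F]
    {g : ℕ} {r : Fin g → ℕ} (c : ∀ i : Fin g, Fin (r i) → F) : ℕ :=
  ∑ i, (Finset.univ.filter fun j => c i j ≠ 0).card

/-- Minimum Hamming distance of a (possibly nonlinear) code. -/
noncomputable def hamMinDist {F : Type*} [Field F] [DecidableEq F]
    {g : ℕ} {r : Fin g → ℕ} (C : Set (∀ i : Fin g, Fin (r i) → F)) : ℕ :=
  sInf {w | ∃ c ∈ C, ∃ d ∈ C, c ≠ d ∧ w = hamWeight (c - d)}

/-- Blockwise multiplication of a block vector by a block-diagonal matrix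
`diag(A_1, …, A_g)` with entries in the subfield `Fq`. -/
noncomputable def blockMul {Fq F : Type*} [Field Fq] [Field F] [Algebra Fq F]
    {g : ℕ} {r n : Fin g → ℕ} (c : ∀ i : Fin g, Fin (r i) → F)
    (A : ∀ i : Fin g, Matrix (Fin (r i)) (Fin (n i)) Fq) :
    ∀ i : Fin g, Fin (n i) → F :=
  fun i j => ∑ t, c i t * algebraMap Fq F (A i t j)

/-- Rank of the submatrix of `A` given by the columns indexed by `R`. -/
noncomputable def colRank {Fq : Type*} [Field Fq] {a b : ℕ}
    (A : Matrix (Fin a) (Fin b) Fq) (R : Finset (Fin b)) : ℕ :=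
  (A.submatrix id (fun j : R => (j : Fin b))).rank

/-- Restriction of a block vector to the unerased coordinates `R_i` in each block. -/
def restrictTo {F : Type*} {g : ℕ} {n : Fin g → ℕ} (R : ∀ i : Fin g, Finset (Fin (n i)))
    (c : ∀ i : Fin g, Fin (n i) → F) : ∀ i : Fin g, (R i) → F :=
  fun i j => c i j.1

open Module Submodule Matrix

section Aux
variable {Fq F : Type*} [Field Fq] [Field F] [Algebra Fq F]

private noncomputable def Phi {a : ℕ} (x : Fin a → F) : (Fin a → Fq) →ₗ[Fq] F :=
  Fintype.linearCombination Fq x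

lemma Phi_apply {a : ℕ} (x : Fin a → F) (w : Fin a → Fq) :
    Phi x w = ∑ t, x t * algebraMap Fq F (w t) := by
  simp [Phi, Fintype.linearCombination_apply, Algebra.smul_def, mul_comm]

lemma range_Phi {a : ℕ} (x : Fin a → F) :
    LinearMap.range (Phi (Fq := Fq) x) = span Fq (Set.range x) :=
  Fintype.range_linearCombination ..

/-- Lemma A: blockwise, sum-rank weight is at most Hamming weight. -/
lemma aux_sr_le_ham {a : ℕ} (v : Fin a → F) [DecidableEq F] :
    finrank Fq (span Fq (Set.range v)) ≤ (Finset.univ.filter fun j => v j ≠ 0).card := by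
  classical
  set s : Finset F := (Finset.univ.filter fun j => v j ≠ 0).image v with hs
  have heq : span Fq (Set.range v) = span Fq (insert (0 : F) ↑s) := by
    apply le_antisymm
    · rw [span_le]
      rintro _ ⟨j, rfl⟩
      by_cases h : v j = 0
      · rw [h]; exact subset_span (Set.mem_insert _ _)
      · refine subset_span (Set.mem_insert_iff.mpr (Or.inr ?_))
        exact_mod_cast Finset.mem_image_of_mem v (by simp [h])
    · rw [span_le]
      rintro y hy
      rcases Set.mem_insert_iff.mp hy with h | h
      · rw [h]; exact zero_mem _
      · obtain ⟨j, -, rfl⟩ := Finset.mem_image.mp (by exact_mod_cast h)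
        exact subset_span ⟨j, rfl⟩
  rw [heq, span_insert_zero]
  exact (finrank_span_finset_le_card s).trans Finset.card_image_le

/-- Key rank lemma: if `x·A` vanishes on the columns in `R`, the `Fq`-rank of `x`
plus the rank of the columns of `A` in `R` is at most `a`. -/
lemma aux_rank_le {a b : ℕ} (A : Matrix (Fin a) (Fin b) Fq) (R : Finset (Fin b)) (x : Fin a → F)
    (hx : ∀ j ∈ R, ∑ t, x t * algebraMap Fq F (A t j) = 0) :
    finrank Fq (span Fq (Set.range x)) + colRank A R ≤ a := by
  classical
  set M : Matrix (Fin a) R Fq := A.submatrix id (fun j : R => (j : Fin b)) with hM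
  have hspan : span Fq (Set.range Mᵀ) ≤ LinearMap.ker (Phi (Fq := Fq) x) := by
    rw [span_le]
    rintro _ ⟨j, rfl⟩
    rw [SetLike.mem_coe, LinearMap.mem_ker, Phi_apply]
    exact hx j j.2
  have h1 : colRank A R ≤ finrank Fq (LinearMap.ker (Phi (Fq := Fq) x)) := by
    rw [colRank, Matrix.rank_eq_finrank_span_cols]
    exact Submodule.finrank_mono hspan
  have h2 := LinearMap.finrank_range_add_finrank_ker (Phi (Fq := Fq) x)
  rw [range_Phi] at h2
  have h3 : finrank Fq (Fin a → Fq) = a := by simp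
  omega

end Aux

section Aux2
variable {Fq F : Type*} [Field Fq] [Field F] [Algebra Fq F]

/-- Lemma C: an invertible matrix realizing the rank of `x` as a support. -/
lemma aux_exists_transform {a : ℕ} (x : Fin a → F) :
    ∃ P : Matrix (Fin a) (Fin a) Fq, IsUnit P ∧
      ∃ R : Finset (Fin a),
        R.card + finrank Fq (span Fq (Set.range x)) = a ∧
        (∀ R' : Finset (Fin a), colRank P R' = R'.card) ∧
        ∀ j ∈ R, ∑ t, x t * algebraMap Fq F (P t j) = 0 := by
  classical
  set Φ := Phi (Fq := Fq) x with hΦ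
  set K := LinearMap.ker Φ with hKdef
  obtain ⟨W, hW⟩ := Submodule.exists_isCompl K
  let bK := Module.finBasis Fq K
  let bW := Module.finBasis Fq W
  have hpi : finrank Fq (Fin a → Fq) = a := by simp
  have hsum : finrank Fq W + finrank Fq K = a := by
    have := Submodule.finrank_add_eq_of_isCompl hW.symm
    omega
  let e1 : (W × K) ≃ₗ[Fq] (Fin a → Fq) := Submodule.prodEquivOfIsCompl W K hW.symm
  let b0 : Basis (Fin (finrank Fq W) ⊕ Fin (finrank Fq K)) Fq (Fin a → Fq) := (bW.prod bK).map e1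
  let eqv : (Fin (finrank Fq W) ⊕ Fin (finrank Fq K)) ≃ Fin a :=
    finSumFinEquiv.trans (finCongr hsum)
  let b' : Basis (Fin a) Fq (Fin a → Fq) := b0.reindex eqv
  have hb'K : ∀ t : Fin (finrank Fq K), (b' (eqv (Sum.inr t)) : Fin a → Fq) ∈ K := by
    intro t
    have h1 : b' (eqv (Sum.inr t)) = e1 ((bW.prod bK) (Sum.inr t)) := by
      simp [b', b0, Basis.reindex_apply, Equiv.symm_apply_apply, Basis.map_apply]
    have h2 : (bW.prod bK) (Sum.inr t) = ((0 : W), bK t) := by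
      ext
      · simp
      · simp
    rw [h1, h2, Submodule.coe_prodEquivOfIsCompl']
    simpa using (bK t).2
  let P : Matrix (Fin a) (Fin a) Fq := (Pi.basisFun Fq (Fin a)).toMatrix ⇑b'
  have hPapp : ∀ t j, P t j = b' j t := by
    intro t j
    simp [P, Basis.toMatrix_apply, Pi.basisFun_repr]
  have hPunit : IsUnit P := by
    have := (Pi.basisFun Fq (Fin a)).invertibleToMatrix b'
    exact isUnit_of_invertible P
  have hcols : ∀ R' : Finset (Fin a), colRank P R' = R'.card := by
    intro R'
    rw [colRank, Matrix.rank_eq_finrank_span_cols]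
    have hT : (P.submatrix id (fun j : R' => (j : Fin a))).col
        = (⇑b' ∘ fun j : R' => (j : Fin a)) := by
      ext j t
      simp [Matrix.transpose_apply, Matrix.submatrix_apply, hPapp, Function.comp]
    rw [hT]
    have hli : LinearIndependent Fq (⇑b' ∘ fun j : R' => (j : Fin a)) :=
      b'.linearIndependent.comp _ Subtype.val_injective
    rw [finrank_span_eq_card hli, Fintype.card_coe]
  refine ⟨P, hPunit, Finset.image (fun t => eqv (Sum.inr t)) Finset.univ, ?_, hcols, ?_⟩
  · have hinj : Function.Injective (fun t : Fin (finrank Fq K) => eqv (Sum.inr t)) :=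
      fun s t hst => Sum.inr_injective (eqv.injective hst)
    rw [Finset.card_image_of_injective _ hinj, Finset.card_univ, Fintype.card_fin]
    have h2 := LinearMap.finrank_range_add_finrank_ker (Phi (Fq := Fq) x)
    rw [range_Phi] at h2
    have hKK : finrank Fq K = finrank Fq (LinearMap.ker (Phi (Fq := Fq) x)) := by
      rw [hKdef, hΦ]
    omega
  · intro j hj
    obtain ⟨t, -, rfl⟩ := Finset.mem_image.mp hj
    have h5 : (fun t' => P t' (eqv (Sum.inr t))) = (b' (eqv (Sum.inr t)) : Fin a → Fq) := by
      ext t'; rw [hPapp]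
    have h6 : Φ (b' (eqv (Sum.inr t))) = 0 := hb'K t
    have h7 : Φ (b' (eqv (Sum.inr t))) = ∑ t', x t' * algebraMap Fq F (P t' (eqv (Sum.inr t))) := by
      rw [hΦ, Phi_apply]
      exact Finset.sum_congr rfl fun t' _ => by rw [hPapp]
    rw [← h7]
    exact h6

/-- multiplying by an invertible matrix over the subfield is injective. -/
lemma aux_eq_zero {a : ℕ} {P : Matrix (Fin a) (Fin a) Fq} (hP : IsUnit P)
    {x : Fin a → F} (hx : ∀ j, ∑ t, x t * algebraMap Fq F (P t j) = 0) : x = 0 := by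
  classical
  obtain ⟨u, rfl⟩ := hP
  set f := algebraMap Fq F
  set M := (u : Matrix (Fin a) (Fin a) Fq).map f with hMdef
  have hxM : x ᵥ* M = 0 := by
    ext j
    simpa [Matrix.vecMul, dotProduct, hMdef, Matrix.map_apply] using hx j
  have h10 : (x ᵥ* M) ᵥ* ((↑u⁻¹ : Matrix (Fin a) (Fin a) Fq).map f) = x := by
    rw [Matrix.vecMul_vecMul, ← Matrix.map_mul, Units.mul_inv,
      Matrix.map_one f (map_zero f) (map_one f), Matrix.vecMul_one]
  rw [hxM, Matrix.zero_vecMul] at h10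
  exact h10.symm

/-- difference of block products. -/
lemma aux_blockdiff {g : ℕ} {r n : Fin g → ℕ} (c d : ∀ i : Fin g, Fin (r i) → F)
    (A : ∀ i : Fin g, Matrix (Fin (r i)) (Fin (n i)) Fq) (i : Fin g) (j : Fin (n i)) :
    blockMul c A i j - blockMul d A i j = ∑ t, (c - d) i t * algebraMap Fq F (A i t j) := by
  simp [blockMul, ← Finset.sum_sub_distrib, sub_mul]

end Aux2

section Aux3
variable {Fq F : Type*} [Field Fq] [Fintype Fq] [Field F] [Fintype F] [Algebra Fq F]

/-- Singleton bound: some pair of codewords is at sum-rank distance at most `N - k + 1`. -/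
lemma aux_singleton {g : ℕ} {r : Fin g → ℕ} (k : ℕ) (hk : 1 ≤ k) (hkN : k ≤ ∑ i, r i)
    (Cout : Set (∀ i : Fin g, Fin (r i) → F)) (hC : Cout.Nontrivial)
    (hcard : Nat.card Cout = Fintype.card Fq ^ (Module.finrank Fq F * k)) :
    ∃ c ∈ Cout, ∃ d ∈ Cout, c ≠ d ∧ srWeight Fq (c - d) ≤ (∑ i, r i) - k + 1 := by
  classical
  by_contra hcon
  push_neg at hcon
  set N := ∑ i, r i with hN
  have hcardSigma : Fintype.card (Σ i : Fin g, Fin (r i)) = N := by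
    simp [Fintype.card_sigma, hN]
  obtain ⟨T, -, hT⟩ := Finset.exists_subset_card_eq
    (s := (Finset.univ : Finset (Σ i : Fin g, Fin (r i)))) (n := k - 1)
    (by rw [Finset.card_univ, hcardSigma]; omega)
  set ρ : (∀ i : Fin g, Fin (r i) → F) → (T → F) := fun c p => c p.1.1 p.1.2 with hρ
  have hinj : Set.InjOn ρ Cout := by
    intro c hc d hd hcd
    by_contra hne
    have h1 := hcon c hc d hd hne
    -- Hamming support of c - d lies outside T
    have h2 : hamWeight (c - d) ≤ N - (k - 1) := by
      have hham : hamWeight (c - d)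
          = (Finset.univ.sigma fun i : Fin g =>
              Finset.univ.filter fun j => (c - d) i j ≠ 0).card := by
        rw [Finset.card_sigma]; rfl
      rw [hham]
      have hsub : (Finset.univ.sigma fun i : Fin g =>
          Finset.univ.filter fun j => (c - d) i j ≠ 0) ⊆ Tᶜ := by
        intro p hp
        rw [Finset.mem_sigma] at hp
        rw [Finset.mem_compl]
        intro hpT
        have := congrFun hcd (⟨p, hpT⟩ : T)
        simp only [hρ] at this
        have hz : (c - d) p.1 p.2 = 0 := by
          simp [Pi.sub_apply, this]
        exact (Finset.mem_filter.mp hp.2).2 hz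
      calc _ ≤ Tᶜ.card := Finset.card_le_card hsub
        _ = N - (k - 1) := by rw [Finset.card_compl, hcardSigma, hT]
    have h3 : srWeight Fq (c - d) ≤ hamWeight (c - d) :=
      Finset.sum_le_sum fun i _ => aux_sr_le_ham _
    omega
  -- cardinality bound
  have hle : Nat.card Cout ≤ Fintype.card F ^ (k - 1) := by
    have e1 : Nat.card Cout = (ρ '' Cout).ncard := by
      rw [Nat.card_coe_set_eq, Set.ncard_image_of_injOn hinj]
    have e2 : (ρ '' Cout).ncard ≤ (Set.univ : Set (T → F)).ncard :=
      Set.ncard_le_ncard (Set.subset_univ _) Set.finite_univ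
    have e3 : (Set.univ : Set (T → F)).ncard = Fintype.card F ^ (k - 1) := by
      rw [Set.ncard_univ, Nat.card_eq_fintype_card, Fintype.card_fun]
      congr 1
      rw [Fintype.card_coe, hT]
    omega
  have hFcard : Fintype.card F = Fintype.card Fq ^ Module.finrank Fq F :=
    card_eq_pow_finrank
  have hq : 1 < Fintype.card Fq := Fintype.one_lt_card
  have hm : 0 < Module.finrank Fq F := Module.finrank_pos
  rw [hFcard, ← pow_mul] at hle
  rw [hcard] at hle
  have hlt : Module.finrank Fq F * (k - 1) < Module.finrank Fq F * k :=
    Nat.mul_lt_mul_of_le_of_lt (le_refl _) (by omega) hm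
  have := Nat.pow_lt_pow_right hq hlt
  omega

end Aux3

section Main
variable {Fq F : Type*} [Field Fq] [Field F] [Algebra Fq F]

/-- Core of the converse: maximal recoverability implies the minimum sum-rank
distance is large. -/
lemma aux_lower_core {g : ℕ} {r : Fin g → ℕ} (k : ℕ) (hkN : k ≤ ∑ i, r i)
    (Cout : Set (∀ i : Fin g, Fin (r i) → F))
    (H : ∀ (n : Fin g → ℕ) (A : ∀ i : Fin g, Matrix (Fin (r i)) (Fin (n i)) Fq),
        (∀ i, (A i).rank = r i) →
        ∀ R : ∀ i : Fin g, Finset (Fin (n i)),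
          k ≤ ∑ i, colRank (A i) (R i) →
          Set.InjOn (restrictTo R) ((fun c => blockMul c A) '' Cout))
    {c d : ∀ i : Fin g, Fin (r i) → F} (hc : c ∈ Cout) (hd : d ∈ Cout) (hne : c ≠ d) :
    (∑ i, r i) - k + 1 ≤ srWeight Fq (c - d) := by
  classical
  by_contra hcon
  choose P hPunit R hRcard hcolR hvan using
    fun i => aux_exists_transform (Fq := Fq) ((c - d) i)
  have hrank : ∀ i, (P i).rank = r i := by
    intro i
    rw [Matrix.rank_of_isUnit _ (hPunit i), Fintype.card_fin]
  have hsumeq : (∑ i, (R i).card) + srWeight Fq (c - d) = ∑ i, r i := by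
    rw [srWeight, ← Finset.sum_add_distrib]
    exact Finset.sum_congr rfl fun i _ => hRcard i
  have hRge : k ≤ ∑ i, colRank (P i) (R i) := by
    have : ∑ i, colRank (P i) (R i) = ∑ i, (R i).card :=
      Finset.sum_congr rfl fun i _ => hcolR i (R i)
    omega
  have hinj := H r P hrank R hRge
  have heq : blockMul c P = blockMul d P := by
    apply hinj ⟨c, hc, rfl⟩ ⟨d, hd, rfl⟩
    funext i j
    show blockMul c P i j.1 = blockMul d P i j.1
    have := aux_blockdiff (Fq := Fq) c d P i j.1
    rw [hvan i j.1 j.2] at this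
    exact sub_eq_zero.mp this
  have hzero : c - d = 0 := by
    funext i
    have : ((c - d) i : Fin (r i) → F) = 0 := by
      apply aux_eq_zero (hPunit i)
      intro j
      rw [← aux_blockdiff (Fq := Fq) c d P i j, heq, sub_self]
    simpa using this
  exact hne (sub_eq_zero.mp hzero)

end Main


/-- a code `C_out ⊆ F_{q^m}^N` of cardinality `(q^m)^k` is MSRD over
`F_q` for the partition `N = Σ r_i` iff for all full-rank matrices
`A_i ∈ F_q^{r_i × n_i}` the global code `C_out · diag(A_1,…,A_g)` is maximally
recoverable: it corrects every erasure pattern whose unerased coordinates `R_i`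
satisfy `Σ_i Rk(A_i|_{R_i}) ≥ k`. -/
theorem msrd_iff_maximally_recoverable
    {Fq F : Type*} [Field Fq] [Fintype Fq] [Field F] [Fintype F] [Algebra Fq F]
    {g : ℕ} {r : Fin g → ℕ} (k : ℕ) (hk : 1 ≤ k) (hkN : k ≤ ∑ i, r i)
    (Cout : Set (∀ i : Fin g, Fin (r i) → F)) (hC : Cout.Nontrivial)
    (hcard : Nat.card Cout = Fintype.card Fq ^ (Module.finrank Fq F * k)) :
    srMinDist Fq Cout = (∑ i, r i) - k + 1 ↔
      ∀ (n : Fin g → ℕ) (A : ∀ i : Fin g, Matrix (Fin (r i)) (Fin (n i)) Fq),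
        (∀ i, (A i).rank = r i) →
        ∀ R : ∀ i : Fin g, Finset (Fin (n i)),
          k ≤ ∑ i, colRank (A i) (R i) →
          Set.InjOn (restrictTo R) ((fun c => blockMul c A) '' Cout) := by
    classical
  constructor
  · intro hdist n A hA R hR
    rintro y1 ⟨c, hc, rfl⟩ y2 ⟨d, hd, rfl⟩ hres
    by_cases hcd : c = d
    · rw [hcd]
    · exfalso
      have hw : srMinDist Fq Cout ≤ srWeight Fq (c - d) :=
        Nat.sInf_le ⟨c, hc, d, hd, hcd, rfl⟩
      have hvan : ∀ i, ∀ j ∈ R i, ∑ t, (c - d) i t * algebraMap Fq F (A i t j) = 0 := by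
        intro i j hj
        have h7 : blockMul c A i j = blockMul d A i j :=
          congrFun (congrFun hres i) ⟨j, hj⟩
        rw [← aux_blockdiff (Fq := Fq) c d A i j, h7, sub_self]
      have hB := fun i => aux_rank_le (A i) (R i) ((c - d) i) (hvan i)
      have hsum : (∑ i, Module.finrank Fq
            (Submodule.span Fq (Set.range ((c - d) i)))) + ∑ i, colRank (A i) (R i)
          ≤ ∑ i, r i := by
        rw [← Finset.sum_add_distrib]
        exact Finset.sum_le_sum fun i _ => hB i
      have hsw : srWeight Fq (c - d)
          = ∑ i, Module.finrank Fq (Submodule.span Fq (Set.range ((c - d) i))) := rfl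
      rw [hdist] at hw
      omega
  · intro H
    obtain ⟨c0, hc0, d0, hd0, hne0, hb0⟩ := aux_singleton k hk hkN Cout hC hcard
    have hSne : {w | ∃ c ∈ Cout, ∃ d ∈ Cout, c ≠ d ∧ w = srWeight Fq (c - d)}.Nonempty :=
      ⟨srWeight Fq (c0 - d0), c0, hc0, d0, hd0, hne0, rfl⟩
    obtain ⟨c, hc, d, hd, hcd, hwj⟩ := Nat.sInf_mem hSne
    have h1 : (∑ i, r i) - k + 1 ≤ srMinDist Fq Cout := by
      rw [srMinDist, hwj]
      exact aux_lower_core k hkN Cout H hc hd hcd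
    have h2 : srMinDist Fq Cout ≤ (∑ i, r i) - k + 1 :=
      le_trans (Nat.sInf_le ⟨c0, hc0, d0, hd0, hne0, rfl⟩) hb0
    omega
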